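/- arXiv:0901.0696 — 2 statements merged into one kernel-verified Lean document; each statement's English description precedes it below -/
import Mathlib

section
/- The bivariate generating function F(z,u) of Otter trees by symmetrical nodes satisfies F(z,u) = 1 − √(1 − 2z − (2u−1) F(z², u²)) as formal power series, where √ denotes the formal power-series square root with constant term 1. -/
open scoped Classical

/-- Plane binary trees: every node has outdegree 0 or 2. -/
inductive BT where
  | leaf : BT
  | node : BT → BT → BT

/-- Isomorphism of rooted binary trees with *unordered* children. -/
inductive Iso : BT → BT → Prop
  | leaf : Iso .leaf .leaf
  | node {a b c d} : Iso a c → Iso b d → Iso (.node a b) (.node c d)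
  | swap {a b c d} : Iso a d → Iso b c → Iso (.node a b) (.node c d)

theorem Iso.rfl : ∀ t, Iso t t
  | .leaf => .leaf
  | .node l r => .node (Iso.rfl l) (Iso.rfl r)

theorem Iso.symm' {a b : BT} (h : Iso a b) : Iso b a := by
  induction h with
  | leaf => exact .leaf
  | node h1 h2 ih1 ih2 => exact .node ih1 ih2
  | swap h1 h2 ih1 ih2 => exact .swap ih2 ih1

theorem Iso.trans' : ∀ {a b c : BT}, Iso a b → Iso b c → Iso a c := by
  intro a b c h1
  induction h1 generalizing c with
  | leaf => exact fun h2 => h2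
  | node g1 g2 ih1 ih2 =>
      intro h2
      cases h2 with
      | node k1 k2 => exact .node (ih1 k1) (ih2 k2)
      | swap k1 k2 => exact .swap (ih1 k1) (ih2 k2)
  | swap g1 g2 ih1 ih2 =>
      intro h2
      cases h2 with
      | node k1 k2 => exact .swap (ih1 k2) (ih2 k1)
      | swap k1 k2 => exact .node (ih1 k2) (ih2 k1)

instance btSetoid : Setoid BT :=
  ⟨Iso, ⟨Iso.rfl, Iso.symm', Iso.trans'⟩⟩

/-- Otter trees: isomorphism classes of unordered rooted binary trees. -/
def Otter : Type := Quotient btSetoid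

/-- Number of leaves. -/
def leavesBT : BT → ℕ
  | .leaf => 1
  | .node l r => leavesBT l + leavesBT r

/-- Number of internal (binary) nodes. -/
def internalsBT : BT → ℕ
  | .leaf => 0
  | .node l r => internalsBT l + internalsBT r + 1

/-- Number of symmetrical nodes: internal nodes whose two subtrees are isomorphic. -/
noncomputable def symBT : BT → ℕ
  | .leaf => 0
  | .node l r => symBT l + symBT r + (if Iso l r then 1 else 0)

theorem leaves_iso {a b : BT} (h : Iso a b) : leavesBT a = leavesBT b := by
  induction h with
  | leaf => rfl
  | node h1 h2 ih1 ih2 => simp [leavesBT, ih1, ih2]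
  | swap h1 h2 ih1 ih2 => simp [leavesBT, ih1, ih2]; omega

theorem internals_iso {a b : BT} (h : Iso a b) : internalsBT a = internalsBT b := by
  induction h with
  | leaf => rfl
  | node h1 h2 ih1 ih2 => simp [internalsBT, ih1, ih2]
  | swap h1 h2 ih1 ih2 => simp [internalsBT, ih1, ih2]; omega

theorem sym_iso {a b : BT} (h : Iso a b) : symBT a = symBT b := by
  induction h with
  | leaf => rfl
  | @node a b c d h1 h2 ih1 ih2 =>
      have hiff : Iso a b ↔ Iso c d :=
        ⟨fun hab => (h1.symm'.trans' hab).trans' h2,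
         fun hcd => (h1.trans' hcd).trans' h2.symm'⟩
      simp only [symBT, ih1, ih2, if_congr hiff rfl rfl]
  | @swap a b c d h1 h2 ih1 ih2 =>
      have hiff : Iso a b ↔ Iso c d :=
        ⟨fun hab => (h2.symm'.trans' hab.symm').trans' h1,
         fun hcd => (h1.trans' hcd.symm').trans' h2.symm'⟩
      simp only [symBT, ih1, ih2, if_congr hiff rfl rfl]
      omega

def Otter.leaves : Otter → ℕ := Quotient.lift leavesBT fun _ _ h => leaves_iso h
def Otter.internals : Otter → ℕ := Quotient.lift internalsBT fun _ _ h => internals_iso h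
noncomputable def Otter.sym : Otter → ℕ := Quotient.lift symBT fun _ _ h => sym_iso h

/-- The set (as a type) of Otter trees with `n` leaves. -/
def OtterN (n : ℕ) : Type := {q : Otter // q.leaves = n}

/-- Wedderburn–Etherington numbers: number of Otter trees with `n` leaves. -/
noncomputable def WE (n : ℕ) : ℕ := Nat.card (OtterN n)

/-- Binary trees with labeled leaves. -/
inductive LBT where
  | leaf : ℕ → LBT
  | node : LBT → LBT → LBT

/-- Label-preserving isomorphism with unordered children. -/
inductive LIso : LBT → LBT → Prop
  | leaf (k : ℕ) : LIso (.leaf k) (.leaf k)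
  | node {a b c d} : LIso a c → LIso b d → LIso (.node a b) (.node c d)
  | swap {a b c d} : LIso a d → LIso b c → LIso (.node a b) (.node c d)

theorem LIso.rfl : ∀ t, LIso t t
  | .leaf k => .leaf k
  | .node l r => .node (LIso.rfl l) (LIso.rfl r)

theorem LIso.symm' {a b : LBT} (h : LIso a b) : LIso b a := by
  induction h with
  | leaf k => exact .leaf k
  | node h1 h2 ih1 ih2 => exact .node ih1 ih2
  | swap h1 h2 ih1 ih2 => exact .swap ih2 ih1

theorem LIso.trans' : ∀ {a b c : LBT}, LIso a b → LIso b c → LIso a c := by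
  intro a b c h1
  induction h1 generalizing c with
  | leaf k => exact fun h2 => h2
  | node g1 g2 ih1 ih2 =>
      intro h2
      cases h2 with
      | node k1 k2 => exact .node (ih1 k1) (ih2 k2)
      | swap k1 k2 => exact .swap (ih1 k1) (ih2 k2)
  | swap g1 g2 ih1 ih2 =>
      intro h2
      cases h2 with
      | node k1 k2 => exact .swap (ih1 k2) (ih2 k1)
      | swap k1 k2 => exact .node (ih1 k2) (ih2 k1)

instance ltSetoid : Setoid LBT :=
  ⟨LIso, ⟨LIso.rfl, LIso.symm', LIso.trans'⟩⟩

/-- Labeled (phylogenetic-type) trees up to label-preserving isomorphism. -/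
def LTree : Type := Quotient ltSetoid

/-- The multiset of leaf labels. -/
def labelsLT : LBT → Multiset ℕ
  | .leaf k => {k}
  | .node l r => labelsLT l + labelsLT r

/-- The underlying unlabeled shape of a labeled tree. -/
def shapeLT : LBT → BT
  | .leaf _ => .leaf
  | .node l r => .node (shapeLT l) (shapeLT r)

theorem labels_iso {a b : LBT} (h : LIso a b) : labelsLT a = labelsLT b := by
  induction h with
  | leaf k => rfl
  | node h1 h2 ih1 ih2 => simp [labelsLT, ih1, ih2]
  | swap h1 h2 ih1 ih2 => simp [labelsLT, ih1, ih2]; exact add_comm _ _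

theorem shape_iso {a b : LBT} (h : LIso a b) : Iso (shapeLT a) (shapeLT b) := by
  induction h with
  | leaf k => exact .leaf
  | node h1 h2 ih1 ih2 => exact .node ih1 ih2
  | swap h1 h2 ih1 ih2 => exact .swap ih1 ih2

def LTree.labels : LTree → Multiset ℕ := Quotient.lift labelsLT fun _ _ h => labels_iso h

def LTree.shape : LTree → Otter :=
  Quotient.lift (fun t => (⟦shapeLT t⟧ : Otter)) fun _ _ h => Quotient.sound (shape_iso h)

/-- Phylogenetic trees of size `n`: labeled trees whose leaf labels are exactly `1, …, n`. -/
def Phylo (n : ℕ) : Type := {q : LTree // q.labels = (Finset.Icc 1 n).val}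

/-- The number of phylogenetic trees of size `n`. -/
noncomputable def phyloCount (n : ℕ) : ℕ := Nat.card (Phylo n)

/-- The double factorial `n!! = n·(n-2)·(n-4)···`. -/
def doubleFac : ℕ → ℕ
  | 0 => 1
  | 1 => 1
  | (n+2) => (n+2) * doubleFac n

/-- The probability that two independent uniformly random phylogenetic trees of
size `n` are isomorphic (have the same shape). -/
noncomputable def pIso (n : ℕ) : ℚ :=
  (Nat.card {pp : Phylo n × Phylo n // pp.1.1.shape = pp.2.1.shape} : ℚ)
    / (Nat.card (Phylo n) : ℚ) ^ 2

/-- The bivariate generating function `F(z,u) = Σ_t u^{sym t} z^{|t|}` of Otter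
trees, as a power series in `z` with coefficients in `ℚ[u]`. -/
noncomputable def Fgen : PowerSeries (Polynomial ℚ) :=
  PowerSeries.mk fun n => ∑ᶠ t : OtterN n, (Polynomial.X : Polynomial ℚ) ^ t.1.sym

/-- The substituted series `F(z², u²)`. -/
noncomputable def Fgen2 : PowerSeries (Polynomial ℚ) :=
  PowerSeries.mk fun n =>
    if n % 2 = 0 then (PowerSeries.coeff (n / 2) Fgen).comp (Polynomial.X ^ 2)
    else 0

/-! ### Auxiliary development for `F_sqrt_form` -/

deriving instance DecidableEq for BT

namespace OtterAux

open Polynomial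

/-- Preorder encoding of a binary tree into a list of booleans. -/
def enc : BT → List Bool
  | .leaf => [false]
  | .node l r => true :: (enc l ++ enc r)

theorem enc_prefix : ∀ (t t' : BT) (s s' : List Bool),
    enc t ++ s = enc t' ++ s' → t = t' ∧ s = s' := by
  intro t
  induction t with
  | leaf =>
      intro t' s s' h
      cases t' with
      | leaf => simpa [enc] using h
      | node c d => simp [enc] at h
  | node l r ihl ihr =>
      intro t' s s' h
      cases t' with
      | leaf => simp [enc] at h
      | node c d =>
          simp only [enc, List.cons_append, List.cons.injEq, List.append_assoc] at h
          obtain ⟨-, h⟩ := h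
          obtain ⟨rfl, h2⟩ := ihl c (enc r ++ s) (enc d ++ s') h
          obtain ⟨rfl, rfl⟩ := ihr d s s' h2
          exact ⟨rfl, rfl⟩

theorem enc_injective : Function.Injective enc := by
  intro t t' h
  have := enc_prefix t t' [] [] (by simpa using h)
  exact this.1

theorem leavesBT_pos : ∀ t, 1 ≤ leavesBT t := by
  intro t; induction t with
  | leaf => simp [leavesBT]
  | node l r ihl ihr => simp [leavesBT]; omega

theorem enc_length : ∀ t, (enc t).length + 1 = 2 * leavesBT t := by
  intro t; induction t with
  | leaf => simp [enc, leavesBT]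
  | node l r ihl ihr => simp [enc, leavesBT]; omega

def encV (n : ℕ) (t : {t : BT // leavesBT t = n}) : List.Vector Bool (2 * n - 1) :=
  ⟨enc t.1, by
    have h1 := enc_length t.1
    have h2 := leavesBT_pos t.1
    have ht := t.2
    omega⟩

instance finiteBTn (n : ℕ) : Finite {t : BT // leavesBT t = n} := by
  refine Finite.of_injective (encV n) ?_
  intro a b h
  exact Subtype.ext (enc_injective (congrArg Subtype.val h))

theorem Otter.leaves_mk (t : BT) : Otter.leaves ⟦t⟧ = leavesBT t := rfl
theorem Otter.sym_mk (t : BT) : Otter.sym ⟦t⟧ = symBT t := rfl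

instance finiteOtterN (n : ℕ) : Finite (OtterN n) := by
  refine Finite.of_surjective
    (fun t : {t : BT // leavesBT t = n} => (⟨⟦t.1⟧, t.2⟩ : OtterN n)) ?_
  rintro ⟨q, hq⟩
  obtain ⟨t, rfl⟩ := q.exists_rep
  exact ⟨⟨t, hq⟩, rfl⟩

noncomputable instance fintypeOtterN (n : ℕ) : Fintype (OtterN n) := Fintype.ofFinite _

theorem Otter.leaves_pos (q : Otter) : 1 ≤ q.leaves := by
  induction q using Quotient.ind with
  | _ t => exact leavesBT_pos t

/-- Ordered pairs of Otter trees with total leaf count `n`. -/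
def OPair (n : ℕ) : Type := {p : Otter × Otter // p.1.leaves + p.2.leaves = n}

/-- Otter trees `x` with `2·|x| = n` (used for the diagonal). -/
def ODiag (n : ℕ) : Type := {q : Otter // 2 * q.leaves = n}

def opairEquiv (n : ℕ) :
    OPair n ≃ Σ ij : Finset.HasAntidiagonal.antidiagonal n, OtterN ij.1.1 × OtterN ij.1.2 where
  toFun p := ⟨⟨(p.1.1.leaves, p.1.2.leaves), by
      simpa [Finset.HasAntidiagonal.mem_antidiagonal] using p.2⟩, ⟨p.1.1, rfl⟩, ⟨p.1.2, rfl⟩⟩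
  invFun s := ⟨(s.2.1.1, s.2.2.1), by
      rw [s.2.1.2, s.2.2.2]; exact Finset.HasAntidiagonal.mem_antidiagonal.mp s.1.2⟩
  left_inv p := rfl
  right_inv := by
    rintro ⟨⟨⟨i, j⟩, h⟩, ⟨x, hx⟩, ⟨y, hy⟩⟩
    dsimp only at hx hy
    subst hx; subst hy
    rfl

instance finiteOPair (n : ℕ) : Finite (OPair n) := Finite.of_equiv _ (opairEquiv n).symm
noncomputable instance fintypeOPair (n : ℕ) : Fintype (OPair n) := Fintype.ofFinite _

def odiagToOtterN (n : ℕ) (q : ODiag n) : OtterN (n / 2) :=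
  ⟨q.1, by have := q.2; omega⟩

instance finiteODiag (n : ℕ) : Finite (ODiag n) :=
  Finite.of_injective (odiagToOtterN n)
    (fun _ _ h => Subtype.ext (congrArg (Subtype.val : OtterN (n / 2) → Otter) h))

noncomputable instance fintypeODiag (n : ℕ) : Fintype (ODiag n) := Fintype.ofFinite _

/-- Unordered-node operation on Otter trees. -/
def onode : Otter → Otter → Otter :=
  Quotient.lift₂ (fun a b => (⟦BT.node a b⟧ : Otter))
    (fun _ _ _ _ h1 h2 => Quotient.sound (Iso.node h1 h2))

theorem onode_mk (a b : BT) : onode ⟦a⟧ ⟦b⟧ = ⟦BT.node a b⟧ := rfl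

theorem onode_comm (x y : Otter) : onode x y = onode y x := by
  refine Quotient.inductionOn₂ x y fun a b => ?_
  exact Quotient.sound (Iso.swap (Iso.rfl a) (Iso.rfl b))

theorem leaves_onode (x y : Otter) : (onode x y).leaves = x.leaves + y.leaves := by
  refine Quotient.inductionOn₂ x y fun a b => rfl

theorem sym_onode (x y : Otter) :
    (onode x y).sym = x.sym + y.sym + if x = y then 1 else 0 := by
  refine Quotient.inductionOn₂ x y fun a b => ?_
  show symBT (.node a b) = symBT a + symBT b
    + @ite ℕ ((⟦a⟧ : Otter) = ⟦b⟧) (Classical.propDecidable _) 1 0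
  by_cases h : Iso a b
  · rw [if_pos (Quotient.sound h : (⟦a⟧ : Otter) = ⟦b⟧)]
    show symBT (.node a b) = symBT a + symBT b + 1
    rw [symBT, if_pos h]
  · rw [if_neg (fun he : (⟦a⟧ : Otter) = ⟦b⟧ => h (Quotient.exact he))]
    show symBT (.node a b) = symBT a + symBT b + 0
    rw [symBT, if_neg h]

theorem onode_inj {a b c d : Otter} (h : onode a b = onode c d) :
    (a = c ∧ b = d) ∨ (a = d ∧ b = c) := by
  induction a using Quotient.ind with | _ a =>
  induction b using Quotient.ind with | _ b =>
  induction c using Quotient.ind with | _ c =>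
  induction d using Quotient.ind with | _ d =>
  have h' := Quotient.exact h
  cases h' with
  | node h1 h2 => exact Or.inl ⟨Quotient.sound h1, Quotient.sound h2⟩
  | swap h1 h2 => exact Or.inr ⟨Quotient.sound h1, Quotient.sound h2⟩

theorem exists_node {q : Otter} (h : 2 ≤ q.leaves) : ∃ x y, q = onode x y := by
  induction q using Quotient.ind with | _ t =>
  cases t with
  | leaf =>
      have h1 : Otter.leaves ⟦BT.leaf⟧ = 1 := rfl
      omega
  | node l r => exact ⟨⟦l⟧, ⟦r⟧, rfl⟩

theorem leaves_eq_one {q : Otter} (h : q.leaves = 1) : q = (⟦BT.leaf⟧ : Otter) := by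
  induction q using Quotient.ind with | _ t =>
  cases t with
  | leaf => rfl
  | node l r =>
      have h1 := leavesBT_pos l
      have h2 := leavesBT_pos r
      rw [Otter.leaves_mk, leavesBT] at h
      omega

instance : IsEmpty (OtterN 0) :=
  ⟨fun q => by have h1 := Otter.leaves_pos q.1; have h2 := q.2; omega⟩

instance : Unique (OtterN 1) where
  default := ⟨⟦BT.leaf⟧, rfl⟩
  uniq := fun q => Subtype.ext (leaves_eq_one q.2)

theorem coeff_Fgen (n : ℕ) :
    PowerSeries.coeff n Fgen
      = ∑ t : OtterN n, (X : Polynomial ℚ) ^ t.1.sym := by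
  rw [Fgen, PowerSeries.coeff_mk, finsum_eq_sum_of_fintype]

theorem coeff_Fgen_zero : PowerSeries.coeff 0 Fgen = 0 := by
  rw [coeff_Fgen]; simp

theorem coeff_Fgen_one : PowerSeries.coeff 1 Fgen = 1 := by
  rw [coeff_Fgen, Fintype.sum_unique]
  show (X : Polynomial ℚ) ^ symBT BT.leaf = 1
  simp [symBT]

theorem coeff_Fgen_mul (n : ℕ) :
    PowerSeries.coeff n (Fgen * Fgen)
      = ∑ p : OPair n, (X : Polynomial ℚ) ^ (p.1.1.sym + p.1.2.sym) := by
  rw [PowerSeries.coeff_mul,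
    ← Finset.sum_coe_sort (Finset.HasAntidiagonal.antidiagonal n)
      (fun ij => PowerSeries.coeff ij.1 Fgen
        * PowerSeries.coeff ij.2 Fgen),
    Fintype.sum_equiv (opairEquiv n)
      (fun p : OPair n => (X : Polynomial ℚ) ^ (p.1.1.sym + p.1.2.sym))
      (fun s => (X : Polynomial ℚ) ^ (s.2.1.1.sym + s.2.2.1.sym)) (fun p => rfl),
    ← Finset.univ_sigma_univ, Finset.sum_sigma]
  refine Finset.sum_congr rfl fun ij _ => ?_
  rw [Fintype.sum_prod_type, coeff_Fgen, coeff_Fgen, Finset.sum_mul_sum]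
  refine Finset.sum_congr rfl fun x _ => Finset.sum_congr rfl fun y _ => ?_
  rw [pow_add]

/-- The node map from (ordered pairs ⊕ diagonal) onto Otter trees with `n ≥ 2` leaves. -/
def Phi (n : ℕ) : OPair n ⊕ ODiag n → OtterN n
  | .inl p => ⟨onode p.1.1 p.1.2, by rw [leaves_onode]; exact p.2⟩
  | .inr x => ⟨onode x.1 x.1, by rw [leaves_onode]; have := x.2; omega⟩

theorem Phi_surj (n : ℕ) (hn : 2 ≤ n) : Function.Surjective (Phi n) := by
  intro t
  obtain ⟨x, y, ht⟩ := exists_node (show 2 ≤ t.1.leaves by rw [t.2]; exact hn)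
  refine ⟨.inl ⟨(x, y), ?_⟩, ?_⟩
  · rw [← leaves_onode, ← ht]; exact t.2
  · exact Subtype.ext ht.symm

theorem Phi_fiber_card (n : ℕ) (hn : 2 ≤ n) (t : OtterN n) :
    (Finset.univ.filter (fun e => Phi n e = t)).card = 2 := by
  obtain ⟨x, y, ht⟩ := exists_node (show 2 ≤ t.1.leaves by rw [t.2]; exact hn)
  have hxy_leaves : x.leaves + y.leaves = n := by rw [← leaves_onode, ← ht]; exact t.2
  by_cases hxy : x = y
  · subst hxy
    have hd : 2 * x.leaves = n := by omega
    have hset : Finset.univ.filter (fun e => Phi n e = t)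
        = {Sum.inl ⟨(x, x), hxy_leaves⟩, Sum.inr ⟨x, hd⟩} := by
      ext e
      simp only [Finset.mem_filter, Finset.mem_univ, true_and, Finset.mem_insert,
        Finset.mem_singleton]
      constructor
      · intro he
        rcases e with ⟨⟨u, v⟩, hp⟩ | ⟨z, hz⟩
        · have h1 : onode u v = onode x x := by
            have h2 := congrArg Subtype.val he; rw [ht] at h2; exact h2
          rcases onode_inj h1 with ⟨rfl, rfl⟩ | ⟨rfl, rfl⟩ <;> exact Or.inl rfl
        · have h1 : onode z z = onode x x := by
            have h2 := congrArg Subtype.val he; rw [ht] at h2; exact h2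
          rcases onode_inj h1 with ⟨rfl, -⟩ | ⟨rfl, -⟩ <;> exact Or.inr rfl
      · rintro (rfl | rfl) <;> exact Subtype.ext ht.symm
    rw [hset, Finset.card_insert_of_notMem (by simp), Finset.card_singleton]
  · have hyx_leaves : y.leaves + x.leaves = n := by omega
    have hset : Finset.univ.filter (fun e => Phi n e = t)
        = {Sum.inl ⟨(x, y), hxy_leaves⟩, Sum.inl ⟨(y, x), hyx_leaves⟩} := by
      ext e
      simp only [Finset.mem_filter, Finset.mem_univ, true_and, Finset.mem_insert,
        Finset.mem_singleton]
      constructor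
      · intro he
        rcases e with ⟨⟨u, v⟩, hp⟩ | ⟨z, hz⟩
        · have h1 : onode u v = onode x y := by
            have h2 := congrArg Subtype.val he; rw [ht] at h2; exact h2
          rcases onode_inj h1 with ⟨rfl, rfl⟩ | ⟨rfl, rfl⟩
          · exact Or.inl rfl
          · exact Or.inr rfl
        · have h1 : onode z z = onode x y := by
            have h2 := congrArg Subtype.val he; rw [ht] at h2; exact h2
          rcases onode_inj h1 with ⟨rfl, rfl⟩ | ⟨rfl, rfl⟩ <;> exact (hxy rfl).elim
      · rintro (rfl | rfl)
        · exact Subtype.ext ht.symm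
        · refine Subtype.ext ?_
          rw [ht]
          exact onode_comm y x
    rw [hset, Finset.card_insert_of_notMem, Finset.card_singleton]
    simp only [Finset.mem_singleton]
    intro h
    exact hxy (congrArg (fun e : OPair n => e.1.1) (Sum.inl.inj h))

open Polynomial in
theorem sum_Phi (n : ℕ) (hn : 2 ≤ n) :
    ∑ e : OPair n ⊕ ODiag n, (X : Polynomial ℚ) ^ (Phi n e).1.sym
      = 2 * ∑ t : OtterN n, (X : Polynomial ℚ) ^ t.1.sym := by
  rw [Finset.sum_comp (fun t : OtterN n => (X : Polynomial ℚ) ^ t.1.sym) (Phi n),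
    Finset.image_univ_of_surjective (Phi_surj n hn),
    Finset.sum_congr rfl (fun t _ => by rw [Phi_fiber_card n hn t]),
    ← Finset.smul_sum]
  rw [two_smul, two_mul]

open Polynomial in
theorem hdiag (n : ℕ) (f : Otter → Polynomial ℚ) :
    (∑ p : OPair n, if p.1.1 = p.1.2 then f p.1.1 else 0)
      = ∑ x : ODiag n, f x.1 := by
  rw [← Finset.sum_filter]
  refine Finset.sum_bij' (i := fun p hp => (⟨p.1.1, ?_⟩ : ODiag n))
    (j := fun x _ => (⟨(x.1, x.1), ?_⟩ : OPair n)) ?_ ?_ ?_ ?_ ?_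
  · have h2 : p.1.1 = p.1.2 := (Finset.mem_filter.mp hp).2
    have h3 := congrArg Otter.leaves h2
    have h1 := p.2
    omega
  · show x.1.leaves + x.1.leaves = n
    have := x.2; omega
  · intros; exact Finset.mem_univ _
  · intro x _
    refine Finset.mem_filter.mpr ⟨Finset.mem_univ _, rfl⟩
  · intro p hp
    have h2 : p.1.1 = p.1.2 := (Finset.mem_filter.mp hp).2
    exact Subtype.ext (Prod.ext rfl h2)
  · intro x _
    exact Subtype.ext rfl
  · intro p hp
    rfl

open Polynomial in
theorem key (n : ℕ) (hn : 2 ≤ n) :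
    ∑ p : OPair n, (X : Polynomial ℚ) ^ (p.1.1.sym + p.1.2.sym)
      = 2 * (∑ t : OtterN n, (X : Polynomial ℚ) ^ t.1.sym)
        - (2 * (X : Polynomial ℚ) - 1) * ∑ x : ODiag n, (X : Polynomial ℚ) ^ (2 * x.1.sym) := by
  have hsplit := Fintype.sum_sum_type
    (fun e : OPair n ⊕ ODiag n => (X : Polynomial ℚ) ^ (Phi n e).1.sym)
  rw [sum_Phi n hn] at hsplit
  have hD : (∑ x : ODiag n, (X : Polynomial ℚ) ^ (Phi n (Sum.inr x)).1.sym)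
      = (∑ x : ODiag n, (X : Polynomial ℚ) ^ (2 * x.1.sym)) * X := by
    rw [Finset.sum_mul]
    refine Finset.sum_congr rfl fun x _ => ?_
    have hs : (Phi n (Sum.inr x)).1.sym = 2 * x.1.sym + 1 := by
      show (onode x.1 x.1).sym = _
      rw [sym_onode, if_pos rfl, two_mul]
    rw [hs, pow_succ]
  have hB : (∑ p : OPair n, (X : Polynomial ℚ) ^ (Phi n (Sum.inl p)).1.sym)
      = (∑ p : OPair n, (X : Polynomial ℚ) ^ (p.1.1.sym + p.1.2.sym))
        + ∑ p : OPair n, (if p.1.1 = p.1.2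
            then (X : Polynomial ℚ) ^ (2 * p.1.1.sym + 1) - (X : Polynomial ℚ) ^ (2 * p.1.1.sym)
            else 0) := by
    rw [← Finset.sum_add_distrib]
    refine Finset.sum_congr rfl fun p _ => ?_
    by_cases h : p.1.1 = p.1.2
    · have hs : (Phi n (Sum.inl p)).1.sym = p.1.1.sym + p.1.2.sym + 1 := by
        show (onode p.1.1 p.1.2).sym = _
        rw [sym_onode, if_pos h]
      rw [hs, if_pos h, ← h, two_mul]
      ring
    · have hs : (Phi n (Sum.inl p)).1.sym = p.1.1.sym + p.1.2.sym := by
        show (onode p.1.1 p.1.2).sym = _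
        rw [sym_onode, if_neg h, add_zero]
      rw [hs, if_neg h, add_zero]
  rw [hdiag n (fun q => (X : Polynomial ℚ) ^ (2 * q.sym + 1)
      - (X : Polynomial ℚ) ^ (2 * q.sym))] at hB
  have hsub : (∑ x : ODiag n, ((X : Polynomial ℚ) ^ (2 * x.1.sym + 1)
        - (X : Polynomial ℚ) ^ (2 * x.1.sym)))
      = (∑ x : ODiag n, (X : Polynomial ℚ) ^ (2 * x.1.sym)) * X
        - ∑ x : ODiag n, (X : Polynomial ℚ) ^ (2 * x.1.sym) := by
    rw [Finset.sum_sub_distrib, Finset.sum_mul]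
    exact congrArg₂ (· - ·) (Finset.sum_congr rfl fun x _ => pow_succ _ _) rfl
  rw [hsub] at hB
  linear_combination - hB - hsplit - hD

theorem isEmptyODiagOdd (n : ℕ) (h : n % 2 = 1) : IsEmpty (ODiag n) :=
  ⟨fun x => by have := x.2; omega⟩

open Polynomial in
theorem coeff_Fgen2 (n : ℕ) :
    PowerSeries.coeff n Fgen2
      = ∑ x : ODiag n, (X : Polynomial ℚ) ^ (2 * x.1.sym) := by
  rw [Fgen2, PowerSeries.coeff_mk]
  by_cases h : n % 2 = 0
  · rw [if_pos h, coeff_Fgen]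
    have hc : ((∑ t : OtterN (n / 2), (X : Polynomial ℚ) ^ t.1.sym).comp (X ^ 2))
        = ∑ t : OtterN (n / 2), (X : Polynomial ℚ) ^ (2 * t.1.sym) := by
      rw [Polynomial.comp, Polynomial.eval₂_finset_sum]
      refine Finset.sum_congr rfl fun t _ => ?_
      show ((X : Polynomial ℚ) ^ t.1.sym).comp (X ^ 2) = _
      rw [Polynomial.pow_comp, Polynomial.X_comp, ← pow_mul]
    rw [hc]
    refine Finset.sum_bij' (i := fun (t : OtterN (n / 2)) _ => (⟨t.1, ?_⟩ : ODiag n))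
      (j := fun x _ => odiagToOtterN n x) ?_ ?_ ?_ ?_ ?_
    · have := t.2; omega
    · intros; exact Finset.mem_univ _
    · intros; exact Finset.mem_univ _
    · intro t _; exact Subtype.ext rfl
    · intro x _; exact Subtype.ext rfl
    · intro t _; rfl
  · rw [if_neg h]
    haveI : IsEmpty (ODiag n) := isEmptyODiagOdd n (by omega)
    rw [Finset.univ_eq_empty, Finset.sum_empty]

instance : IsEmpty (OPair 0) :=
  ⟨fun p => by
    have h1 := Otter.leaves_pos p.1.1
    have h2 := Otter.leaves_pos p.1.2
    have h3 := p.2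
    omega⟩

instance : IsEmpty (OPair 1) :=
  ⟨fun p => by
    have h1 := Otter.leaves_pos p.1.1
    have h2 := Otter.leaves_pos p.1.2
    have h3 := p.2
    omega⟩

instance : IsEmpty (ODiag 0) :=
  ⟨fun x => by have h1 := Otter.leaves_pos x.1; have h2 := x.2; omega⟩

end OtterAux

/-- `F(z,u) = 1 − √(1 − 2z − (2u−1) F(z²,u²))`, i.e. `1 − F` is the
formal square root with constant term 1 of `1 − 2z − (2u−1)F(z²,u²)`. -/
theorem F_sqrt_form :
    PowerSeries.constantCoeff Fgen = 0 ∧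
    (1 - Fgen) ^ 2 =
      1 - 2 * PowerSeries.X
        - PowerSeries.C (2 * Polynomial.X - 1 : Polynomial ℚ) * Fgen2 := by
  constructor
  · rw [← PowerSeries.coeff_zero_eq_constantCoeff]
    exact OtterAux.coeff_Fgen_zero
  · have hC2 : PowerSeries.C (2 : Polynomial ℚ) = 2 := map_ofNat _ 2
    have hL : (1 - Fgen) ^ 2
        = 1 - PowerSeries.C (2 : Polynomial ℚ) * Fgen + Fgen * Fgen := by
      rw [hC2]; ring
    have hR : (1 : PowerSeries (Polynomial ℚ)) - 2 * PowerSeries.X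
          - PowerSeries.C (2 * Polynomial.X - 1 : Polynomial ℚ) * Fgen2
        = 1 - PowerSeries.C (2 : Polynomial ℚ) * PowerSeries.X
          - PowerSeries.C (2 * Polynomial.X - 1 : Polynomial ℚ) * Fgen2 := by
      rw [hC2]
    rw [hL, hR]
    refine PowerSeries.ext fun k => ?_
    simp only [map_add, map_sub, sub_mul, PowerSeries.coeff_one,
      PowerSeries.coeff_C_mul, PowerSeries.coeff_X, one_mul,
      OtterAux.coeff_Fgen_mul, OtterAux.coeff_Fgen2, OtterAux.coeff_Fgen]
    match k with
    | 0 =>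
        rw [Finset.univ_eq_empty (α := OtterAux.OPair 0),
          Finset.univ_eq_empty (α := OtterAux.ODiag 0),
          Finset.univ_eq_empty (α := OtterN 0)]
        simp
    | 1 =>
        have h1 : (∑ t : OtterN 1, (Polynomial.X : Polynomial ℚ) ^ t.1.sym) = 1 := by
          rw [← OtterAux.coeff_Fgen]; exact OtterAux.coeff_Fgen_one
        haveI : IsEmpty (OtterAux.ODiag 1) := OtterAux.isEmptyODiagOdd 1 rfl
        rw [h1, Finset.univ_eq_empty (α := OtterAux.OPair 1),
          Finset.univ_eq_empty (α := OtterAux.ODiag 1)]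
        simp
    | (m + 2) =>
        rw [OtterAux.key (m + 2) (by omega)]
        rw [if_neg (by omega : ¬ m + 2 = 0), if_neg (by omega : ¬ m + 2 = 1)]
        ring
end

section
/- The sequence A_n = Σ_{t ∈ U_n} 2^{sym(t)}, giving the total number of automorphisms over all Otter trees with n leaves, begins A_1 = 1, A_2 = 2, A_3 = 2, A_4 = 10, A_5 = 14, A_6 = 42, A_7 = 90, A_8 = 354, and satisfies A_1 = 1 and, for n ≥ 2, A_n = (1/2) Σ_{k=1}^{n-1} A_k A_{n−k} + (3/2)·[n even]·B_{n/2}, where B_m = Σ_{t ∈ U_m} 4^{sym(t)}. -/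
open scoped Classical

/-- `A_n = Σ_{t ∈ U_n} 2^{sym t}`: total number of automorphisms of Otter trees
with `n` leaves. -/
noncomputable def autSum (n : ℕ) : ℚ := ∑ᶠ t : OtterN n, (2 : ℚ) ^ t.1.sym

/-- `B_m = Σ_{t ∈ U_m} 4^{sym t}`. -/
noncomputable def autSum4 (m : ℕ) : ℚ := ∑ᶠ t : OtterN m, (4 : ℚ) ^ t.1.sym

attribute [reducible] OtterN

section Aux

open scoped Classical

theorem leavesBT_pos : ∀ t : BT, 1 ≤ leavesBT t
  | .leaf => le_refl 1
  | .node l r => by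
      have h1 := leavesBT_pos l
      simp only [leavesBT]; omega

private def unnode {n : ℕ} :
    {t : BT // leavesBT t ≤ n + 1} → Option ({t : BT // leavesBT t ≤ n} × {t : BT // leavesBT t ≤ n})
  | ⟨.leaf, _⟩ => none
  | ⟨.node l r, h⟩ =>
      some (⟨l, by have := leavesBT_pos r; simp only [leavesBT] at h; omega⟩,
            ⟨r, by have := leavesBT_pos l; simp only [leavesBT] at h; omega⟩)

theorem finite_le (n : ℕ) : Finite {t : BT // leavesBT t ≤ n} := by
  induction n with
  | zero =>
      have : IsEmpty {t : BT // leavesBT t ≤ 0} :=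
        ⟨fun x => by have := leavesBT_pos x.1; omega⟩
      infer_instance
  | succ n ih =>
      haveI := ih
      haveI : Finite (Option ({t : BT // leavesBT t ≤ n} × {t : BT // leavesBT t ≤ n})) :=
        Finite.of_equiv _ (Equiv.optionEquivSumPUnit.{0,0} _).symm
      apply Finite.of_injective (unnode (n := n))
      rintro ⟨a, ha⟩ ⟨b, hb⟩ h
      cases a <;> cases b <;> simp_all [unnode]

instance finiteOtterN (n : ℕ) : Finite (OtterN n) := by
  haveI := finite_le n
  haveI : Finite {t : BT // leavesBT t = n} :=
    Finite.of_injective (fun x => (⟨x.1, le_of_eq x.2⟩ : {t : BT // leavesBT t ≤ n}))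
      (by
        intro a b h
        apply Subtype.ext
        have : ((⟨a.1, le_of_eq a.2⟩ : {t : BT // leavesBT t ≤ n})).1
            = ((⟨b.1, le_of_eq b.2⟩ : {t : BT // leavesBT t ≤ n})).1 := congrArg Subtype.val h
        exact this)
  apply Finite.of_surjective
    (fun t : {t : BT // leavesBT t = n} => (⟨⟦t.1⟧, t.2⟩ : OtterN n))
  rintro ⟨q, hq⟩
  obtain ⟨t, rfl⟩ := q.exists_rep
  exact ⟨⟨t, hq⟩, rfl⟩

noncomputable instance fintypeOtterN (n : ℕ) : Fintype (OtterN n) := Fintype.ofFinite _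

/-- Joining two Otter trees at a new root. -/
def onode : Otter → Otter → Otter :=
  Quotient.lift₂ (fun a b => (⟦BT.node a b⟧ : Otter))
    (fun _ _ _ _ h1 h2 => Quotient.sound (Iso.node h1 h2))

@[simp] theorem onode_mk (a b : BT) : onode ⟦a⟧ ⟦b⟧ = ⟦BT.node a b⟧ := rfl

theorem leaves_onode (a b : Otter) : (onode a b).leaves = a.leaves + b.leaves :=
  Quotient.inductionOn₂ a b fun _ _ => rfl

theorem sym_onode (a b : Otter) :
    (onode a b).sym = a.sym + b.sym + (if a = b then 1 else 0) := by
  refine Quotient.inductionOn₂ a b fun x y => ?_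
  show symBT (BT.node x y) = symBT x + symBT y + _
  simp only [symBT]
  congr 1
  by_cases h : Iso x y
  · rw [if_pos h]; exact (if_pos (Quotient.sound h : (⟦x⟧ : Otter) = ⟦y⟧)).symm
  · rw [if_neg h]; exact (if_neg fun hq => h (Quotient.exact (s := btSetoid) hq)).symm

theorem onode_comm (a b : Otter) : onode a b = onode b a :=
  Quotient.inductionOn₂ a b fun x y =>
    Quotient.sound (Iso.swap (Iso.rfl x) (Iso.rfl y))

theorem onode_inj {a b c d : Otter} (h : onode a b = onode c d) :
    (a = c ∧ b = d) ∨ (a = d ∧ b = c) := by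
  refine Quotient.inductionOn₂ a b (fun x y => ?_) h
  refine Quotient.inductionOn₂ c d (fun z w h => ?_)
  have h' : Iso (BT.node x y) (BT.node z w) := Quotient.exact h
  cases h' with
  | node h1 h2 => exact Or.inl ⟨Quotient.sound h1, Quotient.sound h2⟩
  | swap h1 h2 => exact Or.inr ⟨Quotient.sound h1, Quotient.sound h2⟩

theorem oleaves_pos (q : Otter) : 1 ≤ q.leaves := by
  obtain ⟨t, rfl⟩ := q.exists_rep
  exact leavesBT_pos t

theorem exists_onode {q : Otter} (h : 2 ≤ q.leaves) : ∃ a b, q = onode a b := by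
  obtain ⟨t, rfl⟩ := q.exists_rep
  cases t with
  | leaf =>
      change 2 ≤ 1 at h
      omega
  | node l r => exact ⟨⟦l⟧, ⟦r⟧, rfl⟩

/-! ### Small trees -/

def oleaf : Otter := ⟦BT.leaf⟧
def T2 : Otter := onode oleaf oleaf
def T3 : Otter := onode T2 oleaf
def T4a : Otter := onode T3 oleaf
def T4b : Otter := onode T2 T2

theorem leaves_oleaf : oleaf.leaves = 1 := rfl
theorem leaves_T2 : T2.leaves = 2 := rfl
theorem leaves_T3 : T3.leaves = 3 := rfl
theorem leaves_T4a : T4a.leaves = 4 := rfl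
theorem leaves_T4b : T4b.leaves = 4 := rfl

theorem sym_oleaf : oleaf.sym = 0 := rfl

theorem T2_ne_oleaf : T2 ≠ oleaf := fun h => by
  have := congrArg Otter.leaves h
  rw [leaves_T2, leaves_oleaf] at this
  omega

theorem T3_ne_oleaf : T3 ≠ oleaf := fun h => by
  have := congrArg Otter.leaves h
  rw [leaves_T3, leaves_oleaf] at this
  omega

theorem sym_T2 : T2.sym = 1 := by
  rw [T2, sym_onode, if_pos rfl, sym_oleaf]

theorem sym_T3 : T3.sym = 1 := by
  rw [T3, sym_onode, if_neg T2_ne_oleaf, sym_oleaf, sym_T2]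

theorem sym_T4a : T4a.sym = 1 := by
  rw [T4a, sym_onode, if_neg T3_ne_oleaf, sym_oleaf, sym_T3]

theorem sym_T4b : T4b.sym = 3 := by
  rw [T4b, sym_onode, if_pos rfl, sym_T2]

theorem T4a_ne_T4b : T4a ≠ T4b := fun h => by
  have := congrArg Otter.sym h
  rw [sym_T4a, sym_T4b] at this
  omega

theorem class1 {q : Otter} (h : q.leaves = 1) : q = oleaf := by
  obtain ⟨t, rfl⟩ := q.exists_rep
  cases t with
  | leaf => rfl
  | node l r =>
      exfalso
      have h1 := leavesBT_pos l
      have h2 := leavesBT_pos r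
      change leavesBT l + leavesBT r = 1 at h
      omega

theorem class2 {q : Otter} (h : q.leaves = 2) : q = T2 := by
  obtain ⟨a, b, rfl⟩ := exists_onode (le_of_eq h.symm)
  rw [leaves_onode] at h
  have ha := oleaves_pos a
  have hb := oleaves_pos b
  have h1 : a.leaves = 1 := by omega
  have h2 : b.leaves = 1 := by omega
  rw [class1 h1, class1 h2]; rfl

theorem class3 {q : Otter} (h : q.leaves = 3) : q = T3 := by
  obtain ⟨a, b, rfl⟩ := exists_onode (show 2 ≤ q.leaves by omega)
  rw [leaves_onode] at h
  have ha := oleaves_pos a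
  have hb := oleaves_pos b
  rcases Nat.lt_or_ge a.leaves 2 with h1 | h1
  · have h2 : a.leaves = 1 := by omega
    have h3 : b.leaves = 2 := by omega
    rw [class1 h2, class2 h3, onode_comm]; rfl
  · have h2 : a.leaves = 2 := by omega
    have h3 : b.leaves = 1 := by omega
    rw [class2 h2, class1 h3]; rfl

theorem class4 {q : Otter} (h : q.leaves = 4) : q = T4a ∨ q = T4b := by
  obtain ⟨a, b, rfl⟩ := exists_onode (show 2 ≤ q.leaves by omega)
  rw [leaves_onode] at h
  have ha := oleaves_pos a
  have hb := oleaves_pos b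
  rcases Nat.lt_or_ge a.leaves 2 with h1 | h1
  · have h2 : a.leaves = 1 := by omega
    have h3 : b.leaves = 3 := by omega
    left; rw [class1 h2, class3 h3, onode_comm]; rfl
  · rcases Nat.lt_or_ge a.leaves 3 with h1' | h1'
    · have h2 : a.leaves = 2 := by omega
      have h3 : b.leaves = 2 := by omega
      right; rw [class2 h2, class2 h3]; rfl
    · have h2 : a.leaves = 3 := by omega
      have h3 : b.leaves = 1 := by omega
      left; rw [class3 h2, class1 h3]; rfl

/-! ### Small sums -/

theorem autSum_one : autSum 1 = 1 := by
  rw [autSum, finsum_eq_sum_of_fintype]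
  have huniv : (Finset.univ : Finset (OtterN 1)) = {⟨oleaf, leaves_oleaf⟩} := by
    ext x
    simp only [Finset.mem_univ, Finset.mem_singleton, true_iff]
    exact Subtype.ext (class1 x.2)
  rw [huniv, Finset.sum_singleton]
  show (2 : ℚ) ^ (Otter.sym oleaf) = 1
  rw [sym_oleaf]
  norm_num

theorem autSum4_one : autSum4 1 = 1 := by
  rw [autSum4, finsum_eq_sum_of_fintype]
  have huniv : (Finset.univ : Finset (OtterN 1)) = {⟨oleaf, leaves_oleaf⟩} := by
    ext x
    simp only [Finset.mem_univ, Finset.mem_singleton, true_iff]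
    exact Subtype.ext (class1 x.2)
  rw [huniv, Finset.sum_singleton]
  show (4 : ℚ) ^ (Otter.sym oleaf) = 1
  rw [sym_oleaf]
  norm_num

theorem autSum4_two : autSum4 2 = 4 := by
  rw [autSum4, finsum_eq_sum_of_fintype]
  have huniv : (Finset.univ : Finset (OtterN 2)) = {⟨T2, leaves_T2⟩} := by
    ext x
    simp only [Finset.mem_univ, Finset.mem_singleton, true_iff]
    exact Subtype.ext (class2 x.2)
  rw [huniv, Finset.sum_singleton]
  show (4 : ℚ) ^ (Otter.sym T2) = 4
  rw [sym_T2]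
  norm_num

theorem autSum4_three : autSum4 3 = 4 := by
  rw [autSum4, finsum_eq_sum_of_fintype]
  have huniv : (Finset.univ : Finset (OtterN 3)) = {⟨T3, leaves_T3⟩} := by
    ext x
    simp only [Finset.mem_univ, Finset.mem_singleton, true_iff]
    exact Subtype.ext (class3 x.2)
  rw [huniv, Finset.sum_singleton]
  show (4 : ℚ) ^ (Otter.sym T3) = 4
  rw [sym_T3]
  norm_num

theorem autSum4_four : autSum4 4 = 68 := by
  rw [autSum4, finsum_eq_sum_of_fintype]
  have huniv : (Finset.univ : Finset (OtterN 4)) = {⟨T4a, leaves_T4a⟩, ⟨T4b, leaves_T4b⟩} := by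
    ext x
    simp only [Finset.mem_univ, Finset.mem_insert, Finset.mem_singleton, true_iff]
    rcases class4 x.2 with h | h
    · left; exact Subtype.ext h
    · right; exact Subtype.ext h
  rw [huniv, Finset.sum_insert (by
    simp only [Finset.mem_singleton]
    exact fun h => T4a_ne_T4b (congrArg Subtype.val h)), Finset.sum_singleton]
  show (4 : ℚ) ^ (Otter.sym T4a) + (4 : ℚ) ^ (Otter.sym T4b) = 68
  rw [sym_T4a, sym_T4b]
  norm_num

/-! ### Helper summation lemmas -/

private theorem double_ite {α β : Type} [Fintype α] [Fintype β] (a0 : α) (b0 : β) (w : ℚ) :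
    (∑ a : α, ∑ b : β, if a = a0 ∧ b = b0 then w else 0) = w := by
  have h1 : ∀ a : α, (∑ b : β, if a = a0 ∧ b = b0 then w else 0)
      = if a = a0 then w else 0 := by
    intro a
    by_cases h : a = a0 <;> simp [h]
  simp only [h1]
  simp

private theorem double_ite_or {α β : Type} [Fintype α] [Fintype β] (a0 a1 : α) (b0 b1 : β)
    (h : a0 ≠ a1) (w : ℚ) :
    (∑ a : α, ∑ b : β, if (a = a0 ∧ b = b0) ∨ (a = a1 ∧ b = b1) then w else 0) = 2 * w := by
  have hpt : ∀ (a : α) (b : β),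
      (if (a = a0 ∧ b = b0) ∨ (a = a1 ∧ b = b1) then w else 0)
      = (if a = a0 ∧ b = b0 then w else 0) + (if a = a1 ∧ b = b1 then w else 0) := by
    intro a b
    by_cases h1 : a = a0 ∧ b = b0
    · have h2 : ¬(a = a1 ∧ b = b1) := fun h2 => h (h1.1.symm.trans h2.1)
      rw [if_pos (Or.inl h1), if_pos h1, if_neg h2, add_zero]
    · by_cases h2 : a = a1 ∧ b = b1
      · rw [if_pos (Or.inr h2), if_neg h1, if_pos h2, zero_add]
      · rw [if_neg (by tauto), if_neg h1, if_neg h2, add_zero]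
  simp only [hpt, Finset.sum_add_distrib]
  rw [double_ite, double_ite]
  ring

private theorem double_cnt {k m : ℕ} {l r : Otter} (hl : l.leaves = k) (hr : r.leaves = m)
    (w : ℚ) :
    (∑ a : OtterN k, ∑ b : OtterN m, if a.1 = l ∧ b.1 = r then w else 0) = w := by
  subst hl; subst hr
  have hc : ∀ (a : OtterN l.leaves) (b : OtterN r.leaves),
      (a.1 = l ∧ b.1 = r)
      = (a = (⟨l, rfl⟩ : OtterN l.leaves) ∧ b = (⟨r, rfl⟩ : OtterN r.leaves)) := by
    intro a b
    apply propext
    constructor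
    · rintro ⟨h1, h2⟩; exact ⟨Subtype.ext h1, Subtype.ext h2⟩
    · rintro ⟨h1, h2⟩; exact ⟨congrArg Subtype.val h1, congrArg Subtype.val h2⟩
  simp only [hc]
  convert double_ite (α := OtterN l.leaves) (β := OtterN r.leaves) (⟨l, rfl⟩ : OtterN l.leaves) (⟨r, rfl⟩ : OtterN r.leaves) w

private theorem double_cnt_or {k m : ℕ} {l r l' r' : Otter} (hne : l ≠ l')
    (hl : l.leaves = k) (hr : r.leaves = m) (hl' : l'.leaves = k) (hr' : r'.leaves = m) (w : ℚ) :
    (∑ a : OtterN k, ∑ b : OtterN m,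
      if (a.1 = l ∧ b.1 = r) ∨ (a.1 = l' ∧ b.1 = r') then w else 0) = 2 * w := by
  subst hl; subst hr
  have hc : ∀ (a : OtterN l.leaves) (b : OtterN r.leaves),
      ((a.1 = l ∧ b.1 = r) ∨ (a.1 = l' ∧ b.1 = r'))
      = ((a = (⟨l, rfl⟩ : OtterN l.leaves) ∧ b = (⟨r, rfl⟩ : OtterN r.leaves))
          ∨ (a = (⟨l', hl'⟩ : OtterN l.leaves) ∧ b = (⟨r', hr'⟩ : OtterN r.leaves))) := by
    intro a b
    apply propext
    constructor
    · rintro (⟨h1, h2⟩ | ⟨h1, h2⟩)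
      · exact Or.inl ⟨Subtype.ext h1, Subtype.ext h2⟩
      · exact Or.inr ⟨Subtype.ext h1, Subtype.ext h2⟩
    · rintro (⟨h1, h2⟩ | ⟨h1, h2⟩)
      · exact Or.inl ⟨congrArg Subtype.val h1, congrArg Subtype.val h2⟩
      · exact Or.inr ⟨congrArg Subtype.val h1, congrArg Subtype.val h2⟩
  simp only [hc]
  convert double_ite_or (α := OtterN l.leaves) (β := OtterN r.leaves) (⟨l, rfl⟩ : OtterN l.leaves) (⟨l', hl'⟩ : OtterN l.leaves) (⟨r, rfl⟩ : OtterN r.leaves) (⟨r', hr'⟩ : OtterN r.leaves) (fun h => hne (congrArg Subtype.val h)) w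

private theorem four_pow (m : ℕ) : (4 : ℚ) ^ m = 2 ^ (m + m) := by
  rw [show (4 : ℚ) = 2 * 2 by norm_num, mul_pow, pow_add]

/-! ### The recurrence -/

theorem autSum_recur (n : ℕ) (hn : 2 ≤ n) :
    autSum n = (1 / 2) * ∑ k ∈ Finset.Ico 1 n, autSum k * autSum (n - k)
      + (if Even n then (3 / 2) * autSum4 (n / 2) else 0) := by
  classical
  have hA : ∀ m, autSum m = ∑ t : OtterN m, (2 : ℚ) ^ t.1.sym :=
    fun m => finsum_eq_sum_of_fintype _
  -- the "ordered pair count" of t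
  set P : OtterN n → Prop := fun t => ∃ s : Otter, t.1 = onode s s with hP
  set cval : OtterN n → ℚ :=
    fun t => if P t then (2 : ℚ) ^ (t.1.sym - 1) else 2 * (2 : ℚ) ^ t.1.sym with hcval
  -- Step 1: the convolution sum counts ordered pairs grouped by the joined tree
  have key1 : ∑ k ∈ Finset.Ico 1 n, autSum k * autSum (n - k)
      = ∑ t : OtterN n, ∑ k ∈ Finset.Ico 1 n, ∑ a : OtterN k, ∑ b : OtterN (n - k),
          (if onode a.1 b.1 = t.1 then (2 : ℚ) ^ (a.1.sym + b.1.sym) else 0) := by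
    rw [Finset.sum_comm]
    apply Finset.sum_congr rfl
    intro k hk
    obtain ⟨hk1, hk2⟩ := Finset.mem_Ico.mp hk
    rw [hA, hA, Finset.sum_mul_sum]
    have inner : ∀ (a : OtterN k) (b : OtterN (n - k)),
        (2 : ℚ) ^ a.1.sym * (2 : ℚ) ^ b.1.sym
        = ∑ t : OtterN n, (if onode a.1 b.1 = t.1 then (2 : ℚ) ^ (a.1.sym + b.1.sym) else 0) := by
      intro a b
      have hl : (onode a.1 b.1).leaves = n := by
        rw [leaves_onode, a.2, b.2]; omega
      have hcond : ∀ t : OtterN n, (onode a.1 b.1 = t.1) = (t = ⟨onode a.1 b.1, hl⟩) :=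
        fun t => propext ⟨fun h => Subtype.ext h.symm, fun h => (congrArg Subtype.val h).symm⟩
      simp only [hcond]
      rw [Finset.sum_ite_eq' Finset.univ, if_pos (Finset.mem_univ _), pow_add]
    calc (∑ a : OtterN k, ∑ b : OtterN (n - k), (2 : ℚ) ^ a.1.sym * (2 : ℚ) ^ b.1.sym)
        = ∑ a : OtterN k, ∑ b : OtterN (n - k), ∑ t : OtterN n,
            (if onode a.1 b.1 = t.1 then (2 : ℚ) ^ (a.1.sym + b.1.sym) else 0) := by
          apply Finset.sum_congr rfl; intro a _
          apply Finset.sum_congr rfl; intro b _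
          exact inner a b
      _ = ∑ a : OtterN k, ∑ t : OtterN n, ∑ b : OtterN (n - k),
            (if onode a.1 b.1 = t.1 then (2 : ℚ) ^ (a.1.sym + b.1.sym) else 0) := by
          apply Finset.sum_congr rfl; intro a _
          exact Finset.sum_comm
      _ = ∑ t : OtterN n, ∑ a : OtterN k, ∑ b : OtterN (n - k),
            (if onode a.1 b.1 = t.1 then (2 : ℚ) ^ (a.1.sym + b.1.sym) else 0) :=
          Finset.sum_comm
  -- Step 2: per-tree evaluation of the ordered pair count
  have key2 : ∀ t : OtterN n,
      (∑ k ∈ Finset.Ico 1 n, ∑ a : OtterN k, ∑ b : OtterN (n - k),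
          (if onode a.1 b.1 = t.1 then (2 : ℚ) ^ (a.1.sym + b.1.sym) else 0))
      = cval t := by
    intro t
    obtain ⟨l, r, hlr⟩ := exists_onode (q := t.1) (by rw [t.2]; exact hn)
    have hl1 := oleaves_pos l
    have hr1 := oleaves_pos r
    have hsum : l.leaves + r.leaves = n := by
      have := t.2
      rw [hlr, leaves_onode] at this
      exact this
    have hmeml : l.leaves ∈ Finset.Ico 1 n := Finset.mem_Ico.mpr ⟨hl1, by omega⟩
    have hmemr : r.leaves ∈ Finset.Ico 1 n := Finset.mem_Ico.mpr ⟨hr1, by omega⟩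
    have hcnd : ∀ (k : ℕ) (a : OtterN k) (b : OtterN (n - k)),
        (onode a.1 b.1 = t.1) ↔ ((a.1 = l ∧ b.1 = r) ∨ (a.1 = r ∧ b.1 = l)) := by
      intro k a b
      rw [hlr]
      constructor
      · intro h
        exact onode_inj h
      · rintro (⟨h1, h2⟩ | ⟨h1, h2⟩)
        · rw [h1, h2]
        · rw [h1, h2, onode_comm]
    by_cases hlr_eq : l = r
    · -- symmetric root
      subst hlr_eq
      have hkn : l.leaves + l.leaves = n := hsum
      have hzero : ∀ k ∈ Finset.Ico 1 n, k ≠ l.leaves →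
          (∑ a : OtterN k, ∑ b : OtterN (n - k),
            (if onode a.1 b.1 = t.1 then (2 : ℚ) ^ (a.1.sym + b.1.sym) else 0)) = 0 := by
        intro k _ hkne
        apply Finset.sum_eq_zero; intro a _
        apply Finset.sum_eq_zero; intro b _
        rw [if_neg]
        intro h
        rcases (hcnd k a b).mp h with ⟨h1, _⟩ | ⟨h1, _⟩ <;>
          exact hkne (a.2.symm.trans (congrArg Otter.leaves h1))
      have hval : (∑ a : OtterN l.leaves, ∑ b : OtterN (n - l.leaves),
          (if onode a.1 b.1 = t.1 then (2 : ℚ) ^ (a.1.sym + b.1.sym) else 0))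
          = (2 : ℚ) ^ (l.sym + l.sym) := by
        have hw : ∀ (a : OtterN l.leaves) (b : OtterN (n - l.leaves)),
            (if onode a.1 b.1 = t.1 then (2 : ℚ) ^ (a.1.sym + b.1.sym) else 0)
            = (if a.1 = l ∧ b.1 = l then (2 : ℚ) ^ (l.sym + l.sym) else 0) := by
          intro a b
          have hc2 : (onode a.1 b.1 = t.1) = (a.1 = l ∧ b.1 = l) := by
            apply propext
            rw [hcnd]
            tauto
          rw [hc2]
          by_cases h : a.1 = l ∧ b.1 = l
          · rw [if_pos h, if_pos h, h.1, h.2]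
          · rw [if_neg h, if_neg h]
        simp only [hw]
        exact double_cnt rfl (by omega) _
      have hstep : ∀ k ∈ Finset.Ico 1 n,
          (∑ a : OtterN k, ∑ b : OtterN (n - k),
            (if onode a.1 b.1 = t.1 then (2 : ℚ) ^ (a.1.sym + b.1.sym) else 0))
          = (if k = l.leaves then (2 : ℚ) ^ (l.sym + l.sym) else 0) := by
        intro k hk
        by_cases h : k = l.leaves
        · subst h; rw [if_pos rfl]; exact hval
        · rw [if_neg h]; exact hzero k hk h
      rw [Finset.sum_congr rfl hstep, Finset.sum_ite_eq' (Finset.Ico 1 n), if_pos hmeml]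
      have hPt : P t := ⟨l, hlr⟩
      simp only [hcval, if_pos hPt]
      have hsymt : t.1.sym = l.sym + l.sym + 1 := by
        rw [hlr, sym_onode, if_pos rfl]
      rw [hsymt]
      norm_num
    · -- asymmetric root
      have hPt : ¬ P t := by
        rintro ⟨s, hs⟩
        rw [hlr] at hs
        rcases onode_inj hs with ⟨h1, h2⟩ | ⟨h1, h2⟩ <;> exact hlr_eq (h1.trans h2.symm)
      have hsymt : t.1.sym = l.sym + r.sym := by
        rw [hlr, sym_onode, if_neg hlr_eq, Nat.add_zero]
      have hgoal : cval t = 2 * (2 : ℚ) ^ (l.sym + r.sym) := by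
        simp only [hcval, if_neg hPt, hsymt]
      rw [hgoal]
      by_cases hll : l.leaves = r.leaves
      · -- same number of leaves on both sides
        have hzero : ∀ k ∈ Finset.Ico 1 n, k ≠ l.leaves →
            (∑ a : OtterN k, ∑ b : OtterN (n - k),
              (if onode a.1 b.1 = t.1 then (2 : ℚ) ^ (a.1.sym + b.1.sym) else 0)) = 0 := by
          intro k _ hkne
          apply Finset.sum_eq_zero; intro a _
          apply Finset.sum_eq_zero; intro b _
          rw [if_neg]
          intro h
          rcases (hcnd k a b).mp h with ⟨h1, _⟩ | ⟨h1, _⟩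
          · exact hkne (a.2.symm.trans (congrArg Otter.leaves h1))
          · exact hkne ((a.2.symm.trans (congrArg Otter.leaves h1)).trans hll.symm)
        have hval : (∑ a : OtterN l.leaves, ∑ b : OtterN (n - l.leaves),
            (if onode a.1 b.1 = t.1 then (2 : ℚ) ^ (a.1.sym + b.1.sym) else 0))
            = 2 * (2 : ℚ) ^ (l.sym + r.sym) := by
          have hw : ∀ (a : OtterN l.leaves) (b : OtterN (n - l.leaves)),
              (if onode a.1 b.1 = t.1 then (2 : ℚ) ^ (a.1.sym + b.1.sym) else 0)
              = (if (a.1 = l ∧ b.1 = r) ∨ (a.1 = r ∧ b.1 = l)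
                  then (2 : ℚ) ^ (l.sym + r.sym) else 0) := by
            intro a b
            rw [show (onode a.1 b.1 = t.1) = ((a.1 = l ∧ b.1 = r) ∨ (a.1 = r ∧ b.1 = l)) from
              propext (hcnd _ a b)]
            by_cases h : (a.1 = l ∧ b.1 = r) ∨ (a.1 = r ∧ b.1 = l)
            · rw [if_pos h, if_pos h]
              rcases h with ⟨h1, h2⟩ | ⟨h1, h2⟩
              · rw [h1, h2]
              · rw [h1, h2, Nat.add_comm]
            · rw [if_neg h, if_neg h]
          simp only [hw]
          exact double_cnt_or hlr_eq rfl (by omega) hll.symm (by omega) _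
        have hstep : ∀ k ∈ Finset.Ico 1 n,
            (∑ a : OtterN k, ∑ b : OtterN (n - k),
              (if onode a.1 b.1 = t.1 then (2 : ℚ) ^ (a.1.sym + b.1.sym) else 0))
            = (if k = l.leaves then 2 * (2 : ℚ) ^ (l.sym + r.sym) else 0) := by
          intro k hk
          by_cases h : k = l.leaves
          · subst h; rw [if_pos rfl]; exact hval
          · rw [if_neg h]; exact hzero k hk h
        rw [Finset.sum_congr rfl hstep, Finset.sum_ite_eq' (Finset.Ico 1 n), if_pos hmeml]
      · -- different numbers of leaves
        have hvall : (∑ a : OtterN l.leaves, ∑ b : OtterN (n - l.leaves),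
            (if onode a.1 b.1 = t.1 then (2 : ℚ) ^ (a.1.sym + b.1.sym) else 0))
            = (2 : ℚ) ^ (l.sym + r.sym) := by
          have hw : ∀ (a : OtterN l.leaves) (b : OtterN (n - l.leaves)),
              (if onode a.1 b.1 = t.1 then (2 : ℚ) ^ (a.1.sym + b.1.sym) else 0)
              = (if a.1 = l ∧ b.1 = r then (2 : ℚ) ^ (l.sym + r.sym) else 0) := by
            intro a b
            have hc2 : (onode a.1 b.1 = t.1) = (a.1 = l ∧ b.1 = r) := by
              apply propext
              rw [hcnd]
              constructor
              · rintro (⟨h1, h2⟩ | ⟨h1, h2⟩)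
                · exact ⟨h1, h2⟩
                · exact absurd (a.2.symm.trans (congrArg Otter.leaves h1)) hll
              · exact Or.inl
            rw [hc2]
            by_cases h : a.1 = l ∧ b.1 = r
            · rw [if_pos h, if_pos h, h.1, h.2]
            · rw [if_neg h, if_neg h]
          simp only [hw]
          exact double_cnt rfl (by omega) _
        have hvalr : (∑ a : OtterN r.leaves, ∑ b : OtterN (n - r.leaves),
            (if onode a.1 b.1 = t.1 then (2 : ℚ) ^ (a.1.sym + b.1.sym) else 0))
            = (2 : ℚ) ^ (l.sym + r.sym) := by
          have hw : ∀ (a : OtterN r.leaves) (b : OtterN (n - r.leaves)),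
              (if onode a.1 b.1 = t.1 then (2 : ℚ) ^ (a.1.sym + b.1.sym) else 0)
              = (if a.1 = r ∧ b.1 = l then (2 : ℚ) ^ (l.sym + r.sym) else 0) := by
            intro a b
            have hc2 : (onode a.1 b.1 = t.1) = (a.1 = r ∧ b.1 = l) := by
              apply propext
              rw [hcnd]
              constructor
              · rintro (⟨h1, h2⟩ | ⟨h1, h2⟩)
                · exact absurd ((congrArg Otter.leaves h1).symm.trans a.2) hll
                · exact ⟨h1, h2⟩
              · exact Or.inr
            rw [hc2]
            by_cases h : a.1 = r ∧ b.1 = l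
            · rw [if_pos h, if_pos h, h.1, h.2, Nat.add_comm]
            · rw [if_neg h, if_neg h]
          simp only [hw]
          exact double_cnt rfl (by omega) _
        have hstep : ∀ k ∈ Finset.Ico 1 n,
            (∑ a : OtterN k, ∑ b : OtterN (n - k),
              (if onode a.1 b.1 = t.1 then (2 : ℚ) ^ (a.1.sym + b.1.sym) else 0))
            = (if k = l.leaves then (2 : ℚ) ^ (l.sym + r.sym) else 0)
              + (if k = r.leaves then (2 : ℚ) ^ (l.sym + r.sym) else 0) := by
          intro k hk
          by_cases h1 : k = l.leaves
          · subst h1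
            rw [if_pos rfl, if_neg hll, add_zero]
            exact hvall
          · by_cases h2 : k = r.leaves
            · subst h2
              rw [if_neg (fun h => hll h.symm), if_pos rfl, zero_add]
              exact hvalr
            · rw [if_neg h1, if_neg h2, add_zero]
              apply Finset.sum_eq_zero; intro a _
              apply Finset.sum_eq_zero; intro b _
              rw [if_neg]
              intro h
              rcases (hcnd k a b).mp h with ⟨hh, _⟩ | ⟨hh, _⟩
              · exact h1 (a.2.symm.trans (congrArg Otter.leaves hh))
              · exact h2 (a.2.symm.trans (congrArg Otter.leaves hh))
        rw [Finset.sum_congr rfl hstep, Finset.sum_add_distrib,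
          Finset.sum_ite_eq' (Finset.Ico 1 n), Finset.sum_ite_eq' (Finset.Ico 1 n),
          if_pos hmeml, if_pos hmemr]
        ring
  -- Step 3: relate to the symmetric part
  have key3 : ∑ t : OtterN n, ((2 : ℚ) ^ t.1.sym - (1 / 2) * cval t)
      = (if Even n then (3 / 2) * autSum4 (n / 2) else 0) := by
    have hpt : ∀ t : OtterN n,
        (2 : ℚ) ^ t.1.sym - (1 / 2) * cval t
        = (if P t then (3 / 2) * (2 : ℚ) ^ (t.1.sym - 1) else 0) := by
      intro t
      simp only [hcval]
      by_cases h : P t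
      · rw [if_pos h, if_pos h]
        obtain ⟨s, hs⟩ := h
        have hsym : t.1.sym = s.sym + s.sym + 1 := by rw [hs, sym_onode, if_pos rfl]
        rw [hsym]
        simp only [Nat.add_sub_cancel]
        rw [pow_succ]
        ring
      · rw [if_neg h, if_neg h]
        ring
    rw [Finset.sum_congr rfl (fun t _ => hpt t)]
    by_cases he : Even n
    · rw [if_pos he]
      obtain ⟨m, hm⟩ := he
      have hm2 : n / 2 = m := by omega
      have hbij : (∑ t : OtterN n, (if P t then (3 / 2) * (2 : ℚ) ^ (t.1.sym - 1) else 0))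
          = ∑ s : OtterN (n / 2), (3 / 2) * (4 : ℚ) ^ s.1.sym := by
        have step1 : ∀ t : OtterN n,
            (if P t then (3 / 2) * (2 : ℚ) ^ (t.1.sym - 1) else 0)
            = ∑ s : OtterN (n / 2),
                (if t.1 = onode s.1 s.1 then (3 / 2) * (4 : ℚ) ^ s.1.sym else 0) := by
          intro t
          by_cases h : P t
          · obtain ⟨s0, hs0⟩ := h
            have hs0l : s0.leaves = n / 2 := by
              have := t.2
              rw [hs0, leaves_onode] at this
              omega
            have hc : ∀ s : OtterN (n / 2),
                (t.1 = onode s.1 s.1) = (s = (⟨s0, hs0l⟩ : OtterN (n / 2))) := by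
              intro s
              apply propext
              constructor
              · intro hh
                have hh' : onode s0 s0 = onode s.1 s.1 := hs0.symm.trans hh
                rcases onode_inj hh' with ⟨h1, _⟩ | ⟨h1, _⟩ <;> exact Subtype.ext h1.symm
              · intro hh
                rw [hh]
                exact hs0
            simp only [hc]
            rw [Finset.sum_ite_eq' Finset.univ, if_pos (Finset.mem_univ _), if_pos ⟨s0, hs0⟩]
            have hsym : t.1.sym = s0.sym + s0.sym + 1 := by
              rw [hs0, sym_onode, if_pos rfl]
            rw [hsym, Nat.add_sub_cancel, four_pow]
          · rw [if_neg h]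
            symm
            apply Finset.sum_eq_zero
            intro s _
            rw [if_neg]
            intro hh
            exact h ⟨s.1, hh⟩
        rw [Finset.sum_congr rfl fun t _ => step1 t, Finset.sum_comm]
        apply Finset.sum_congr rfl
        intro s _
        have hl : (onode s.1 s.1).leaves = n := by
          rw [leaves_onode, s.2]; omega
        have hc : ∀ t : OtterN n,
            (t.1 = onode s.1 s.1) = (t = (⟨onode s.1 s.1, hl⟩ : OtterN n)) :=
          fun t => propext ⟨fun h => Subtype.ext h, fun h => congrArg Subtype.val h⟩
        simp only [hc]
        rw [Finset.sum_ite_eq' Finset.univ, if_pos (Finset.mem_univ _)]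
      rw [hbij, ← Finset.mul_sum, autSum4, finsum_eq_sum_of_fintype]
    · rw [if_neg he]
      apply Finset.sum_eq_zero
      intro t _
      rw [if_neg]
      rintro ⟨s, hs⟩
      apply he
      have := t.2
      rw [hs, leaves_onode] at this
      exact ⟨s.leaves, this.symm⟩
  -- Assemble
  rw [key1]
  rw [Finset.sum_congr rfl (fun t _ => key2 t)]
  rw [← key3, hA n, Finset.sum_sub_distrib, Finset.mul_sum]
  ring
end Aux

/-- initial values of `A_n` and the recurrence
`A_n = (1/2) Σ A_k A_{n−k} + (3/2)[n even] B_{n/2}`. -/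
theorem autSum_values_and_recurrence :
    autSum 1 = 1 ∧ autSum 2 = 2 ∧ autSum 3 = 2 ∧ autSum 4 = 10 ∧ autSum 5 = 14 ∧
    autSum 6 = 42 ∧ autSum 7 = 90 ∧ autSum 8 = 354 ∧
    ∀ n : ℕ, 2 ≤ n →
      autSum n = (1 / 2) * ∑ k ∈ Finset.Ico 1 n, autSum k * autSum (n - k)
        + (if Even n then (3 / 2) * autSum4 (n / 2) else 0) := by
  have h1 := autSum_one
  have hrec := autSum_recur
  have h2 : autSum 2 = 2 := by
    rw [hrec 2 (by norm_num)]
    rw [show (2:ℕ)/2 = 1 from rfl, autSum4_one, if_pos (by norm_num : Even 2)]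
    rw [Finset.sum_Ico_eq_sum_range]
    norm_num [Finset.sum_range_succ, h1]
  have h3 : autSum 3 = 2 := by
    rw [hrec 3 (by norm_num)]
    rw [if_neg (by decide : ¬ Even 3)]
    rw [Finset.sum_Ico_eq_sum_range]
    norm_num [Finset.sum_range_succ, h1, h2]
  have h4 : autSum 4 = 10 := by
    rw [hrec 4 (by norm_num)]
    rw [show (4:ℕ)/2 = 2 from rfl, autSum4_two, if_pos (by decide : Even 4)]
    rw [Finset.sum_Ico_eq_sum_range]
    norm_num [Finset.sum_range_succ, h1, h2, h3]
  have h5 : autSum 5 = 14 := by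
    rw [hrec 5 (by norm_num)]
    rw [if_neg (by decide : ¬ Even 5)]
    rw [Finset.sum_Ico_eq_sum_range]
    norm_num [Finset.sum_range_succ, h1, h2, h3, h4]
  have h6 : autSum 6 = 42 := by
    rw [hrec 6 (by norm_num)]
    rw [show (6:ℕ)/2 = 3 from rfl, autSum4_three, if_pos (by decide : Even 6)]
    rw [Finset.sum_Ico_eq_sum_range]
    norm_num [Finset.sum_range_succ, h1, h2, h3, h4, h5]
  have h7 : autSum 7 = 90 := by
    rw [hrec 7 (by norm_num)]
    rw [if_neg (by decide : ¬ Even 7)]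
    rw [Finset.sum_Ico_eq_sum_range]
    norm_num [Finset.sum_range_succ, h1, h2, h3, h4, h5, h6]
  have h8 : autSum 8 = 354 := by
    rw [hrec 8 (by norm_num)]
    rw [show (8:ℕ)/2 = 4 from rfl, autSum4_four, if_pos (by decide : Even 8)]
    rw [Finset.sum_Ico_eq_sum_range]
    norm_num [Finset.sum_range_succ, h1, h2, h3, h4, h5, h6, h7]
  exact ⟨h1, h2, h3, h4, h5, h6, h7, h8, hrec⟩
end
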